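/- Let G be a locally compact group and suppose f ∈ 𝒫(S^{3},G) (so that also f ∈ 𝒫(S^1,G)). Let φ_{n,1} and φ_{n,3} denote the 1- and 3-Schoenberg functions of f, given by φ_{n,D}(u) := (N_n(D) σ_{D-1} / σ_D) ∫_{-1}^1 f(x,u) c_n(D,x) (1-x²)^{D/2-1} dx for D ∈ {1, 3}. Then φ_{0,3} = φ_{0,1} - (1/2)φ_{2,1}, and φ_{n,3} = (1/2)(n+1)(φ_{n,1} - φ_{n+2,1}) for all n ≥ 1. -/

import Mathlib

open scoped RealInnerProductSpace BigOperators ComplexOrder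
open Polynomial MeasureTheory Filter

/-- Gegenbauer polynomial `C_n^{(λ)}(x)` via its explicit formula. -/
noncomputable def gegenbauerC (lam : ℝ) (n : ℕ) (x : ℝ) : ℝ :=
  ∑ k ∈ Finset.range (n / 2 + 1),
    (-1 : ℝ) ^ k * ((ascPochhammer ℝ (n - k)).eval lam /
      ((Nat.factorial k : ℝ) * (Nat.factorial (n - 2 * k) : ℝ))) * (2 * x) ^ (n - 2 * k)

/-- Chebyshev polynomial of the first kind, evaluated at a real number. -/
noncomputable def chebyshevT (n : ℕ) (x : ℝ) : ℝ := (Polynomial.Chebyshev.T ℝ (n : ℤ)).eval x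

/-- Normalized ultraspherical polynomials `c_n(d,x)`: for `d ≥ 2` the Gegenbauer polynomial
with parameter `λ = (d-1)/2` normalized to be `1` at `x = 1`; for `d = 1` the Chebyshev
polynomial `T_n`. -/
noncomputable def ultraC (d n : ℕ) (x : ℝ) : ℝ :=
  if d = 1 then chebyshevT n x
  else gegenbauerC (((d : ℝ) - 1) / 2) n x / gegenbauerC (((d : ℝ) - 1) / 2) n 1

/-- Dimension `N_n(d)` of the space of spherical harmonics of degree `n` on `S^d`. -/
noncomputable def NNdim (n d : ℕ) : ℝ :=
  if n = 0 then 1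
  else (ascPochhammer ℝ (n - 1)).eval (d : ℝ) * (2 * n + d - 1) / Nat.factorial n

/-- Total surface measure `σ_d = 2 π^((d+1)/2) / Γ((d+1)/2)` of the sphere `S^d`
(for `d = 0` this gives the value `2`). -/
noncomputable def sigmaS (d : ℕ) : ℝ :=
  2 * Real.pi ^ (((d : ℝ) + 1) / 2) / Real.Gamma (((d : ℝ) + 1) / 2)

/-- The class `𝒫(G)` of continuous positive definite functions on a topological group `G`. -/
def IsPosDefOnGroup {G : Type*} [Group G] [TopologicalSpace G] (φ : G → ℂ) : Prop :=
  Continuous φ ∧ ∀ (n : ℕ) (u : Fin n → G) (a : Fin n → ℂ),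
    0 ≤ ∑ k, ∑ l, φ ((u k)⁻¹ * u l) * a k * (starRingEnd ℂ) (a l)

/-- The class `𝒫(S^d, G)`: continuous functions `f` on `[-1,1] × G` such that the kernel
`((ξ,u),(η,v)) ↦ f(ξ·η, u⁻¹v)` is positive definite on `(S^d × G)²`, where `S^d` is the
unit sphere of `ℝ^(d+1)`. -/
def IsPosDefSphereGroup (d : ℕ) {G : Type*} [Group G] [TopologicalSpace G]
    (f : ℝ → G → ℂ) : Prop :=
  ContinuousOn (fun p : ℝ × G => f p.1 p.2) (Set.Icc (-1 : ℝ) 1 ×ˢ Set.univ) ∧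
  ∀ (n : ℕ) (ξ : Fin n → EuclideanSpace ℝ (Fin (d + 1))) (u : Fin n → G),
    (∀ k, ‖ξ k‖ = 1) → ∀ a : Fin n → ℂ,
      0 ≤ ∑ k, ∑ l, f ⟪ξ k, ξ l⟫ ((u k)⁻¹ * u l) * a k * (starRingEnd ℂ) (a l)

/-- The `n`-th `d`-Schoenberg function of `f`:
`φ_{n,d}(u) = (N_n(d) σ_{d-1} / σ_d) ∫_{-1}^1 f(x,u) c_n(d,x) (1-x²)^{d/2-1} dx`. -/
noncomputable def schoenbergFn (d : ℕ) {G : Type*} [Group G] [TopologicalSpace G]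
    (f : ℝ → G → ℂ) (n : ℕ) (u : G) : ℂ :=
  ((NNdim n d * sigmaS (d - 1) / sigmaS d : ℝ) : ℂ) *
    ∫ x in (-1 : ℝ)..1, f x u * ((ultraC d n x : ℝ) : ℂ) *
      (((1 - x ^ 2) ^ ((d : ℝ) / 2 - 1) : ℝ) : ℂ)

/- ### Auxiliary lemmas -/

noncomputable def Ssum (n : ℕ) (x : ℝ) : ℝ :=
  ∑ k ∈ Finset.range (n / 2 + 1), (-1 : ℝ) ^ k * ((n - k).choose k : ℝ) * (2 * x) ^ (n - 2 * k)

lemma choose_vanish {n k : ℕ} (h : n < 2 * k) : (n - k).choose k = 0 := by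
  apply Nat.choose_eq_zero_of_lt
  omega

lemma Ssum_ext (N n : ℕ) (hN : n / 2 + 1 ≤ N) (x : ℝ) :
    Ssum n x = ∑ k ∈ Finset.range N, (-1 : ℝ) ^ k * ((n - k).choose k : ℝ) * (2 * x) ^ (n - 2 * k) := by
  rw [Ssum]
  apply Finset.sum_subset (Finset.range_subset_range.2 hN)
  intro k _ hk
  simp only [Finset.mem_range, not_lt] at hk
  rw [choose_vanish (by omega)]
  simp

lemma Ssum_rec (n : ℕ) (x : ℝ) :
    Ssum (n + 2) x = 2 * x * Ssum (n + 1) x - Ssum n x := by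
  have key : ∀ k ∈ Finset.range (n / 2 + 1),
      (-1 : ℝ) ^ (k+1) * ((n + 2 - (k+1)).choose (k+1) : ℝ) * (2 * x) ^ (n + 2 - 2 * (k+1))
      = 2 * x * ((-1 : ℝ) ^ (k+1) * ((n + 1 - (k+1)).choose (k+1) : ℝ) * (2 * x) ^ (n + 1 - 2 * (k+1)))
        - (-1 : ℝ) ^ k * ((n - k).choose k : ℝ) * (2 * x) ^ (n - 2 * k) := by
    intro k hk
    simp only [Finset.mem_range] at hk
    have hk2 : 2 * k ≤ n := by omega
    have h1 : n + 2 - (k+1) = (n - k) + 1 := by omega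
    have h2 : n + 1 - (k+1) = n - k := by omega
    rw [h1, h2, Nat.choose_succ_succ]
    rcases Nat.lt_or_ge (2*k) n with h | h
    · have e1 : n + 2 - 2*(k+1) = n - 2*k := by omega
      have e2 : n - 2*k = (n + 1 - 2*(k+1)) + 1 := by omega
      rw [e1, e2, pow_succ]
      push_cast
      ring
    · have hn : 2 * k = n := by omega
      have e1 : n + 2 - 2*(k+1) = 0 := by omega
      have e2 : n - 2*k = 0 := by omega
      have e3 : n - k = k := by omega
      have e4 : n + 1 - 2*(k+1) = 0 := by omega
      rw [e1, e2, e3, e4, Nat.choose_self, Nat.choose_succ_self]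
      push_cast
      ring
  have hL : Ssum (n+2) x = (∑ k ∈ Finset.range (n/2+1),
      (-1 : ℝ) ^ (k+1) * ((n + 2 - (k+1)).choose (k+1) : ℝ) * (2 * x) ^ (n + 2 - 2 * (k+1)))
      + (2*x)^(n+2) := by
    have : (n+2)/2 + 1 = (n/2 + 1) + 1 := by omega
    rw [Ssum, this, Finset.sum_range_succ']
    simp
  have hM : Ssum (n+1) x = (∑ k ∈ Finset.range (n/2+1),
      (-1 : ℝ) ^ (k+1) * ((n + 1 - (k+1)).choose (k+1) : ℝ) * (2 * x) ^ (n + 1 - 2 * (k+1)))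
      + (2*x)^(n+1) := by
    rw [Ssum_ext (n/2 + 2) (n+1) (by omega) x, Finset.sum_range_succ']
    simp
  rw [hL, hM, Finset.sum_congr rfl key, Finset.sum_sub_distrib, ← Ssum, mul_add,
    Finset.mul_sum, pow_succ' (2*x) (n+1)]
  ring

noncomputable def Ueval (n : ℕ) (x : ℝ) : ℝ := (Polynomial.Chebyshev.U ℝ (n : ℤ)).eval x

lemma Ueval_add_two (n : ℕ) (x : ℝ) :
    Ueval (n + 2) x = 2 * x * Ueval (n + 1) x - Ueval n x := by
  unfold Ueval
  push_cast
  rw [Polynomial.Chebyshev.U_add_two]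
  simp [mul_assoc]

lemma Ssum_eq_Ueval (n : ℕ) (x : ℝ) : Ssum n x = Ueval n x := by
  induction n using Nat.strong_induction_on with
  | _ n ih =>
    match n with
    | 0 => simp [Ssum, Ueval, Polynomial.Chebyshev.U_zero]
    | 1 =>
      simp [Ssum, Ueval]
    | (n + 2) =>
      rw [Ssum_rec, Ueval_add_two, ih (n+1) (by omega), ih n (by omega)]

lemma Ueval_one (n : ℕ) : Ueval n 1 = n + 1 := by
  induction n using Nat.strong_induction_on with
  | _ n ih =>
    match n with
    | 0 => simp [Ueval, Polynomial.Chebyshev.U_zero]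
    | 1 =>
      norm_num [Ueval]
    | (n + 2) =>
      rw [Ueval_add_two, ih (n+1) (by omega), ih n (by omega)]
      push_cast; ring

lemma geg_one_eq_Ssum (n : ℕ) (x : ℝ) : gegenbauerC 1 n x = Ssum n x := by
  unfold gegenbauerC Ssum
  refine Finset.sum_congr rfl fun k hk => ?_
  simp only [Finset.mem_range] at hk
  have hk2 : 2 * k ≤ n := by omega
  have hkk : k ≤ n - k := by omega
  have hc := Nat.choose_mul_factorial_mul_factorial hkk
  have h2 : (n - k) - k = n - 2 * k := by omega
  rw [h2] at hc
  rw [ascPochhammer_eval_one]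
  congr 1
  congr 1
  have hpos : (k.factorial : ℝ) * (n - 2*k).factorial ≠ 0 := by positivity
  rw [eq_comm, eq_div_iff hpos]
  exact_mod_cast (by rw [← hc]; ring :
    ((n - k).choose k) * (k.factorial * (n - 2*k).factorial) = (n - k).factorial)

lemma TU_identity (n : ℕ) (x : ℝ) :
    2 * (1 - x ^ 2) * Ueval n x = chebyshevT n x - chebyshevT (n + 2) x := by
  have h1 := congrArg (eval x) (Polynomial.Chebyshev.one_sub_X_sq_mul_U_eq_pol_in_T ℝ (n : ℤ))
  have h2 := congrArg (eval x) (Polynomial.Chebyshev.T_add_two ℝ (n : ℤ))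
  simp only [eval_mul, eval_sub, eval_add, eval_one, eval_pow, eval_X, eval_ofNat] at h1 h2
  unfold chebyshevT Ueval
  push_cast
  linear_combination 2 * h1 - h2

lemma sigmaS_zero : sigmaS 0 = 2 := by
  have h : ((0:ℕ):ℝ) + 1 = 1 := by norm_num
  rw [sigmaS, h]
  rw [show (1:ℝ)/2 = (1/2 : ℝ) from rfl, Real.Gamma_one_half_eq, ← Real.sqrt_eq_rpow]
  have : Real.sqrt Real.pi ≠ 0 := by positivity
  field_simp

lemma sigmaS_one : sigmaS 1 = 2 * Real.pi := by
  rw [sigmaS]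
  norm_num [Real.Gamma_one, Real.rpow_one]

lemma sigmaS_two : sigmaS 2 = 4 * Real.pi := by
  rw [sigmaS]
  have h1 : (((2:ℕ):ℝ) + 1) / 2 = 1/2 + 1 := by norm_num
  rw [h1, Real.Gamma_add_one (by norm_num), Real.Gamma_one_half_eq]
  rw [Real.rpow_add Real.pi_pos, Real.rpow_one, ← Real.sqrt_eq_rpow]
  have h2 : Real.sqrt Real.pi ≠ 0 := by positivity
  have h3 : Real.sqrt Real.pi * Real.sqrt Real.pi = Real.pi :=
    Real.mul_self_sqrt Real.pi_pos.le
  field_simp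
  ring

lemma sigmaS_three : sigmaS 3 = 2 * Real.pi ^ 2 := by
  rw [sigmaS]
  have h1 : (((3:ℕ):ℝ) + 1) / 2 = 2 := by norm_num
  rw [h1, Real.Gamma_two]
  rw [show (2:ℝ) = ((2:ℕ):ℝ) by norm_num, Real.rpow_natCast]
  norm_num

lemma asc_three (m : ℕ) : (ascPochhammer ℝ m).eval (3:ℝ) = (m+2).factorial / 2 := by
  induction m with
  | zero => simp [Nat.factorial]
  | succ m ih =>
    rw [ascPochhammer_succ_eval, ih]
    have : ((m+3).factorial : ℝ) = (m+2).factorial * (m+3) := by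
      rw [show m+3 = (m+2)+1 by ring, Nat.factorial_succ]
      push_cast; ring
    rw [show m+1+2 = m+3 by ring, this]
    ring

lemma NNdim_one {n : ℕ} (hn : 1 ≤ n) : NNdim n 1 = 2 := by
  obtain ⟨m, rfl⟩ : ∃ m, n = m + 1 := ⟨n - 1, by omega⟩
  rw [NNdim, if_neg (by omega)]
  simp only [Nat.cast_one, Nat.cast_ofNat]
  rw [show m + 1 - 1 = m from rfl, ascPochhammer_eval_one]
  have h : ((m+1).factorial : ℝ) = (m+1) * m.factorial := by
    rw [Nat.factorial_succ]; push_cast; ring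
  rw [h]
  have hm : (m.factorial : ℝ) ≠ 0 := by positivity
  have hm1 : ((m:ℝ)+1) ≠ 0 := by positivity
  push_cast
  field_simp
  ring

lemma NNdim_three {n : ℕ} (hn : 1 ≤ n) : NNdim n 3 = ((n:ℝ)+1)^2 := by
  obtain ⟨m, rfl⟩ : ∃ m, n = m + 1 := ⟨n - 1, by omega⟩
  rw [NNdim, if_neg (by omega)]
  simp only [Nat.cast_one, Nat.cast_ofNat]
  rw [show m + 1 - 1 = m from rfl, asc_three]
  have h : ((m+2).factorial : ℝ) = (m+2) * ((m+1) * m.factorial) := by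
    rw [Nat.factorial_succ, Nat.factorial_succ]; push_cast; ring
  have h1 : ((m+1).factorial : ℝ) = (m+1) * m.factorial := by
    rw [Nat.factorial_succ]; push_cast; ring
  rw [h, h1]
  have hm : (m.factorial : ℝ) ≠ 0 := by positivity
  push_cast
  field_simp
  ring

lemma NNdim_zero (d : ℕ) : NNdim 0 d = 1 := by simp [NNdim]

lemma weight_integrable :
    IntervalIntegrable (fun x : ℝ => (1 - x ^ 2) ^ ((1:ℝ)/2 - 1)) volume (-1) 1 := by
  have hr : ((1:ℝ)/2 - 1) = -(1/2 : ℝ) := by norm_num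
  rw [hr]
  have h0 : IntervalIntegrable (fun x : ℝ => x ^ (-(1/2) : ℝ)) volume 0 2 :=
    intervalIntegral.intervalIntegrable_rpow' (by norm_num)
  have hA : IntervalIntegrable (fun x : ℝ => (1 - x) ^ (-(1/2) : ℝ)) volume (-1) 1 := by
    have := h0.comp_sub_left 1
    norm_num at this; exact this.symm
  have hB : IntervalIntegrable (fun x : ℝ => (1 + x) ^ (-(1/2) : ℝ)) volume (-1) 1 := by
    have := h0.comp_add_left 1
    norm_num at this; exact this
  refine (hA.add hB).mono_fun' ?_ ?_
  · apply Measurable.aestronglyMeasurable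
    exact (measurable_const.sub (measurable_id.pow_const 2)).pow_const _
  · filter_upwards [ae_restrict_mem measurableSet_uIoc] with x hx
    rw [Set.uIoc_of_le (by norm_num : (-1:ℝ) ≤ 1)] at hx
    obtain ⟨hx1, hx2⟩ := hx
    have h1x : (0:ℝ) ≤ 1 - x := by linarith
    have h1x' : (0:ℝ) < 1 + x := by linarith
    have hnn : (0:ℝ) ≤ (1 - x^2) ^ (-(1/2):ℝ) := Real.rpow_nonneg (by nlinarith) _
    rw [Real.norm_of_nonneg hnn]
    have hdA : (0:ℝ) ≤ (1 - x) ^ (-(1/2):ℝ) := Real.rpow_nonneg h1x _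
    have hdB : (0:ℝ) ≤ (1 + x) ^ (-(1/2):ℝ) := Real.rpow_nonneg h1x'.le _
    rcases le_or_gt 0 x with hx0 | hx0
    · have : (1 - x^2) ^ (-(1/2):ℝ) ≤ (1 - x) ^ (-(1/2):ℝ) := by
        rcases eq_or_lt_of_le h1x with h | h
        · rw [← h]
          have : (1:ℝ) - x^2 = 0 := by nlinarith
          rw [this, Real.zero_rpow (by norm_num)]
        · exact Real.rpow_le_rpow_of_nonpos h (by nlinarith) (by norm_num)
      linarith
    · have : (1 - x^2) ^ (-(1/2):ℝ) ≤ (1 + x) ^ (-(1/2):ℝ) :=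
        Real.rpow_le_rpow_of_nonpos h1x' (by nlinarith) (by norm_num)
      linarith

lemma chebyshevT_continuous (n : ℕ) : Continuous (chebyshevT n) := by
  unfold chebyshevT
  exact Polynomial.continuous _

lemma integrand_integrable {g : ℝ → ℂ} (hg : ContinuousOn g (Set.Icc (-1:ℝ) 1))
    (p : ℝ → ℝ) (hp : Continuous p) :
    IntervalIntegrable
      (fun x => g x * ((p x : ℝ) : ℂ) * (((1 - x ^ 2) ^ ((1:ℝ)/2 - 1) : ℝ) : ℂ))
      volume (-1) 1 := by
  have hgp : ContinuousOn (fun x => g x * ((p x : ℝ) : ℂ)) (Set.Icc (-1:ℝ) 1) :=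
    hg.mul ((Complex.continuous_ofReal.comp hp).continuousOn)
  obtain ⟨M, hM⟩ := isCompact_Icc.exists_bound_of_continuousOn hgp
  have hM0 : 0 ≤ M := le_trans (norm_nonneg _) (hM 0 (by norm_num))
  refine (weight_integrable.const_mul M).mono_fun ?_ ?_
  · have h1 : AEStronglyMeasurable (fun x => g x * ((p x : ℝ) : ℂ))
        (volume.restrict (Set.uIoc (-1:ℝ) 1)) := by
      rw [Set.uIoc_of_le (by norm_num : (-1:ℝ) ≤ 1)]
      exact ((hgp.mono (Set.Ioc_subset_Icc_self)).aestronglyMeasurable measurableSet_Ioc)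
    have h2 : AEStronglyMeasurable
        (fun x : ℝ => (((1 - x ^ 2) ^ ((1:ℝ)/2 - 1) : ℝ) : ℂ))
        (volume.restrict (Set.uIoc (-1:ℝ) 1)) := by
      apply Measurable.aestronglyMeasurable
      exact Complex.measurable_ofReal.comp
        ((measurable_const.sub (measurable_id.pow_const 2)).pow_const _)
    exact h1.mul h2
  · filter_upwards [ae_restrict_mem measurableSet_uIoc] with x hx
    rw [Set.uIoc_of_le (by norm_num : (-1:ℝ) ≤ 1)] at hx
    obtain ⟨hx1, hx2⟩ := hx
    have hw0 : (0:ℝ) ≤ (1 - x ^ 2) ^ ((1:ℝ)/2 - 1) := Real.rpow_nonneg (by nlinarith) _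
    have hb := hM x ⟨hx1.le, hx2⟩
    calc ‖g x * ((p x : ℝ) : ℂ) * (((1 - x ^ 2) ^ ((1:ℝ)/2 - 1) : ℝ) : ℂ)‖
        = ‖g x * ((p x : ℝ) : ℂ)‖ * (1 - x ^ 2) ^ ((1:ℝ)/2 - 1) := by
          rw [norm_mul, Complex.norm_real, Real.norm_of_nonneg hw0]
      _ ≤ M * (1 - x ^ 2) ^ ((1:ℝ)/2 - 1) := by
          exact mul_le_mul_of_nonneg_right hb hw0
      _ ≤ ‖M * (1 - x ^ 2) ^ ((1:ℝ)/2 - 1)‖ := le_abs_self _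

lemma key_real (n : ℕ) {x : ℝ} (hx : x ∈ Set.Icc (-1:ℝ) 1) :
    ultraC 3 n x * (1 - x ^ 2) ^ ((3:ℝ)/2 - 1)
      = (1/(2*((n:ℝ)+1))) *
        ((chebyshevT n x - chebyshevT (n+2) x) * (1 - x ^ 2) ^ ((1:ℝ)/2 - 1)) := by
  have hge1 : gegenbauerC 1 n 1 = (n:ℝ)+1 := by
    rw [geg_one_eq_Ssum, Ssum_eq_Ueval, Ueval_one]
  have hlam : (((3:ℕ):ℝ) - 1) / 2 = 1 := by norm_num
  have h3 : ultraC 3 n x = Ueval n x / ((n:ℝ)+1) := by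
    rw [ultraC, if_neg (by norm_num), hlam, hge1, geg_one_eq_Ssum, Ssum_eq_Ueval]
  have hT := TU_identity n x
  have ha0 : (0:ℝ) ≤ 1 - x^2 := by nlinarith [hx.1, hx.2]
  have e3 : (3:ℝ)/2 - 1 = (1:ℝ)/2 := by norm_num
  have e1 : (1:ℝ)/2 - 1 = -(1/2 : ℝ) := by norm_num
  have hn1 : ((n:ℝ)+1) ≠ 0 := by positivity
  rw [h3, e3, e1, ← hT]
  rcases eq_or_lt_of_le ha0 with h | h
  · rw [← h, Real.zero_rpow (by norm_num), Real.zero_rpow (by norm_num)]; ring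
  · have key : (1 - x^2) * (1 - x^2) ^ (-(1/2):ℝ) = (1 - x^2) ^ ((1:ℝ)/2) := by
      have h2 : (1 - x^2) ^ ((1:ℝ)/2 - 1) = (1 - x^2) ^ ((1:ℝ)/2) / (1 - x^2) := by
        rw [Real.rpow_sub h, Real.rpow_one]
      calc (1 - x^2) * (1 - x^2) ^ (-(1/2):ℝ)
          = (1 - x^2) * (1 - x^2) ^ ((1:ℝ)/2 - 1) := by norm_num
        _ = (1 - x^2) ^ ((1:ℝ)/2) := by
            rw [h2, ← mul_div_assoc, mul_div_cancel_left₀ _ h.ne']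
    rw [show 2 * (1 - x ^ 2) * Ueval n x * (1 - x ^ 2) ^ (-(1/2):ℝ)
        = 2 * Ueval n x * ((1 - x ^ 2) * (1 - x ^ 2) ^ (-(1/2):ℝ)) by ring, key]
    field_simp

lemma ultraC_one (m : ℕ) (x : ℝ) : ultraC 1 m x = chebyshevT m x := by
  rw [ultraC, if_pos rfl]

lemma master {g : ℝ → ℂ} (hg : ContinuousOn g (Set.Icc (-1:ℝ) 1)) (n : ℕ) :
    (∫ x in (-1 : ℝ)..1, g x * ((ultraC 3 n x : ℝ) : ℂ) *
        (((1 - x ^ 2) ^ (((3:ℕ) : ℝ) / 2 - 1) : ℝ) : ℂ))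
    = (((1/(2*((n:ℝ)+1)) : ℝ)) : ℂ) *
      ((∫ x in (-1 : ℝ)..1, g x * ((ultraC 1 n x : ℝ) : ℂ) *
          (((1 - x ^ 2) ^ (((1:ℕ) : ℝ) / 2 - 1) : ℝ) : ℂ))
       - ∫ x in (-1 : ℝ)..1, g x * ((ultraC 1 (n+2) x : ℝ) : ℂ) *
          (((1 - x ^ 2) ^ (((1:ℕ) : ℝ) / 2 - 1) : ℝ) : ℂ)) := by
  have hIn := integrand_integrable hg (chebyshevT n) (chebyshevT_continuous n)
  have hIn2 := integrand_integrable hg (chebyshevT (n+2)) (chebyshevT_continuous (n+2))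
  simp only [Nat.cast_one, Nat.cast_ofNat, ultraC_one]
  have hcong : ∀ x ∈ Set.uIcc (-1:ℝ) 1,
      g x * ((ultraC 3 n x : ℝ) : ℂ) * (((1 - x ^ 2) ^ ((3:ℝ)/2 - 1) : ℝ) : ℂ)
      = (((1/(2*((n:ℝ)+1)) : ℝ)) : ℂ) *
        (g x * ((chebyshevT n x : ℝ) : ℂ) * (((1 - x ^ 2) ^ ((1:ℝ)/2 - 1) : ℝ) : ℂ)
         - g x * ((chebyshevT (n+2) x : ℝ) : ℂ) * (((1 - x ^ 2) ^ ((1:ℝ)/2 - 1) : ℝ) : ℂ)) := by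
    intro x hx
    rw [Set.uIcc_of_le (by norm_num : (-1:ℝ) ≤ 1)] at hx
    have hk := key_real n hx
    have hc : ((ultraC 3 n x * (1 - x ^ 2) ^ ((3:ℝ)/2 - 1) : ℝ) : ℂ)
        = (((1/(2*((n:ℝ)+1))) *
          ((chebyshevT n x - chebyshevT (n+2) x) * (1 - x ^ 2) ^ ((1:ℝ)/2 - 1)) : ℝ) : ℂ) := by
      exact_mod_cast congrArg (fun t : ℝ => (t : ℂ)) hk
    push_cast at hc ⊢
    linear_combination g x * hc
  rw [intervalIntegral.integral_congr hcong, intervalIntegral.integral_const_mul,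
    intervalIntegral.integral_sub hIn hIn2]

/-- Proposition 3.6 (a) of Berg–Porcu: for `f ∈ 𝒫(S^3, G)`, the `1`- and `3`-Schoenberg
functions of `f` satisfy `φ_{0,3} = φ_{0,1} - (1/2) φ_{2,1}` and
`φ_{n,3} = (1/2)(n+1)(φ_{n,1} - φ_{n+2,1})` for `n ≥ 1`. -/
theorem schoenbergFn_recurrence_dim_one {G : Type*} [Group G]
    [TopologicalSpace G] [IsTopologicalGroup G] [LocallyCompactSpace G]
    (f : ℝ → G → ℂ) (hf : IsPosDefSphereGroup 3 f) :
    (∀ u : G, schoenbergFn 3 f 0 u = schoenbergFn 1 f 0 u - (1 / 2 : ℂ) * schoenbergFn 1 f 2 u) ∧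
    ∀ (n : ℕ), 1 ≤ n → ∀ u : G,
      schoenbergFn 3 f n u =
        (1 / 2 : ℂ) * (((n : ℝ) + 1 : ℝ) : ℂ) *
          (schoenbergFn 1 f n u - schoenbergFn 1 f (n + 2) u) := by
  have hgc : ∀ u : G, ContinuousOn (fun x : ℝ => f x u) (Set.Icc (-1:ℝ) 1) := by
    intro u
    exact hf.1.comp (Continuous.continuousOn (continuous_id.prodMk continuous_const))
      (fun x hx => ⟨hx, Set.mem_univ u⟩)
  have hpi : Real.pi ≠ 0 := Real.pi_ne_zero
  constructor
  · intro u
    have hm := master (hgc u) 0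
    simp only [schoenbergFn]
    rw [hm]
    rw [show (3:ℕ) - 1 = 2 from rfl, show (1:ℕ) - 1 = 0 from rfl,
      sigmaS_zero, sigmaS_one, sigmaS_two, sigmaS_three,
      NNdim_zero 3, NNdim_zero 1, NNdim_one (by norm_num : (1:ℕ) ≤ 2)]
    push_cast
    have hpiC : (Real.pi : ℂ) ≠ 0 := by exact_mod_cast hpi
    field_simp
    ring
  · intro n hn u
    have hm := master (hgc u) n
    simp only [schoenbergFn]
    rw [hm]
    rw [show (3:ℕ) - 1 = 2 from rfl, show (1:ℕ) - 1 = 0 from rfl,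
      sigmaS_zero, sigmaS_one, sigmaS_two, sigmaS_three,
      NNdim_three hn, NNdim_one hn, NNdim_one (by omega : 1 ≤ n + 2)]
    push_cast
    have hpiC : (Real.pi : ℂ) ≠ 0 := by exact_mod_cast hpi
    have hn1 : ((n:ℂ)+1) ≠ 0 := by
      have : (0:ℝ) < (n:ℝ) + 1 := by positivity
      exact_mod_cast ne_of_gt (by exact_mod_cast this : (0:ℂ) < ((n:ℝ)+1:ℝ))
    field_simp
    ring
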